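/- arXiv:2309.02018 — 2 statements merged into one kernel-verified Lean document; each statement's English description precedes it below -/
import Mathlib

section
/- Let R > 0, C ≥ 1, α > 0, C₀′ > 0, η₀′ > 0 be reals satisfying R^α ≥ 21C², C₀′·R^{−η₀′α} < 1/(32C²), and 36C²·R^{−η₀′α} ≤ 1/2. Suppose (h′_{p,q})_{0 ≤ p ≤ q} are nonnegative reals with h′_{q,q} ≤ R − (4C)⁻²R^α for all q ≥ 0 and h′_{p,q} ≤ C₀′·R^{α(1−η₀′)(q−p+1)} for all 0 ≤ p < q. Define recursively t′₀ := R − h′_{0,0} and, for q ≥ 1, t′_q := R − h′_{q,q} − Σ_{j=1}^q h′_{q−j,q} / (Π_{i=1}^j t′_{q−i}). Then t′_q ≥ (6C)⁻²·R^α for every q ≥ 0; in particular t′_q > 0 for all q. -/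
private lemma stmt16_rpow_nat (R x : ℝ) (hR : 0 < R) (n : ℕ) :
    R ^ (x * (n : ℝ)) = (R ^ x) ^ n := by
  rw [Real.rpow_mul hR.le, Real.rpow_natCast]

private lemma stmt16_geo (q : ℕ) :
    ∑ j ∈ Finset.Icc 1 q, (1/2 : ℝ) ^ j ≤ 1 - (1/2) ^ q := by
  induction q with
  | zero => simp
  | succ n ih =>
    rw [Finset.sum_Icc_succ_top (by omega)]
    have : ((1:ℝ)/2) ^ (n+1) = (1/2)^n / 2 := by rw [pow_succ]; ring
    nlinarith [ih]

/- STATEMENT 16: the recursive lower bound `t′_q ≥ (6C)⁻² R^α` for the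
quantities of the Cantor construction. -/

theorem stmt16 (R C α C₀' η₀' : ℝ)
    (hR : 0 < R) (hC : 1 ≤ C) (hα : 0 < α) (hC₀' : 0 < C₀') (hη₀' : 0 < η₀')
    (h1 : 21 * C ^ 2 ≤ R ^ α)
    (h2 : C₀' * R ^ (-η₀' * α) < 1 / (32 * C ^ 2))
    (h3 : 36 * C ^ 2 * R ^ (-η₀' * α) ≤ 1 / 2)
    (h' : ℕ → ℕ → ℝ)
    (h'_nonneg : ∀ p q : ℕ, p ≤ q → 0 ≤ h' p q)
    (h'_diag : ∀ q : ℕ, h' q q ≤ R - ((4 * C) ^ 2)⁻¹ * R ^ α)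
    (h'_off : ∀ p q : ℕ, p < q → h' p q ≤ C₀' * R ^ (α * (1 - η₀') * ((q : ℝ) - p + 1)))
    (t' : ℕ → ℝ)
    (ht'0 : t' 0 = R - h' 0 0)
    (ht' : ∀ q : ℕ, 1 ≤ q →
      t' q = R - h' q q
        - ∑ j ∈ Finset.Icc 1 q, h' (q - j) q / ∏ i ∈ Finset.Icc 1 j, t' (q - i)) :
    ∀ q : ℕ, ((6 * C) ^ 2)⁻¹ * R ^ α ≤ t' q ∧ 0 < t' q := by
  have hCpos : (0:ℝ) < C := lt_of_lt_of_le one_pos hC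
  have hA : 0 < R ^ α := Real.rpow_pos_of_pos hR α
  have hr : 0 < R ^ (-η₀' * α) := Real.rpow_pos_of_pos hR _
  set A := R ^ α with hAdef
  set r := R ^ (-η₀' * α) with hrdef
  set T := ((6 * C) ^ 2)⁻¹ * A with hTdef
  have hT : 0 < T := by positivity
  intro q
  induction q using Nat.strong_induction_on with
  | _ q ih =>
    match q with
    | 0 =>
      have hd := h'_diag 0
      have h64 : ((4 * C) ^ 2)⁻¹ * A ≥ T := by
        rw [hTdef]
        have : ((6 * C) ^ 2)⁻¹ ≤ ((4 * C) ^ 2)⁻¹ := by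
          apply inv_anti₀ (by positivity)
          nlinarith
        nlinarith
      constructor
      · rw [ht'0]; linarith
      · rw [ht'0]; linarith
    | Nat.succ n =>
      set q := n + 1 with hq
      have hq1 : 1 ≤ q := by omega
      -- bound each term of the sum
      have hterm : ∀ j ∈ Finset.Icc 1 q,
          h' (q - j) q / ∏ i ∈ Finset.Icc 1 j, t' (q - i)
            ≤ C₀' * r * A * (1/2) ^ j := by
        intro j hj
        simp only [Finset.mem_Icc] at hj
        obtain ⟨hj1, hjq⟩ := hj
        -- product lower bound
        have hprod : T ^ j ≤ ∏ i ∈ Finset.Icc 1 j, t' (q - i) := by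
          have := Finset.prod_le_prod (s := Finset.Icc 1 j)
            (f := fun _ => T) (g := fun i => t' (q - i))
            (fun i _ => hT.le)
            (fun i hi => by
              simp only [Finset.mem_Icc] at hi
              exact (ih (q - i) (by omega)).1)
          simpa [Finset.prod_const, Nat.card_Icc] using this
        have hTj : 0 < T ^ j := pow_pos hT j
        -- numerator bound
        have hnum : h' (q - j) q ≤ C₀' * (A ^ (j+1) * r ^ (j+1)) := by
          have hoff := h'_off (q - j) q (by omega)
          have hcast : ((q : ℝ) - ((q - j : ℕ) : ℝ) + 1) = ((j + 1 : ℕ) : ℝ) := by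
            rw [Nat.cast_sub hjq]; push_cast; ring
          have hexp : α * (1 - η₀') * ((q : ℝ) - ((q - j : ℕ) : ℝ) + 1)
              = α * ((j+1 : ℕ) : ℝ) + (-η₀' * α) * ((j+1 : ℕ) : ℝ) := by
            rw [hcast]; ring
          rw [hexp, Real.rpow_add hR, stmt16_rpow_nat R α hR,
            stmt16_rpow_nat R (-η₀' * α) hR] at hoff
          exact hoff
        have hdiv : h' (q - j) q / ∏ i ∈ Finset.Icc 1 j, t' (q - i)
            ≤ C₀' * (A ^ (j+1) * r ^ (j+1)) / T ^ j :=
          div_le_div₀ (by positivity) hnum hTj hprod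
        have heq : C₀' * (A ^ (j+1) * r ^ (j+1)) / T ^ j
            = C₀' * r * A * (36 * C ^ 2 * r) ^ j := by
          rw [hTdef]
          have hC0 : C ≠ 0 := ne_of_gt hCpos
          have hA0 : A ≠ 0 := ne_of_gt hA
          field_simp
          have e1 : C ^ (j*2) * C⁻¹ ^ (j*2) = 1 := by rw [← mul_pow, mul_inv_cancel₀ hC0, one_pow]
          have e2 : (1/36:ℝ) ^ j * 36 ^ j = 1 := by rw [← mul_pow]; norm_num
          linear_combination (-(A*A^j*r*r^j) * ((1/36:ℝ)^j*36^j)) * e1 - (A*A^j*r*r^j) * e2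
        rw [heq] at hdiv
        refine hdiv.trans ?_
        have hρ : (36 * C ^ 2 * r) ^ j ≤ (1/2) ^ j :=
          pow_le_pow_left₀ (by positivity) h3 j
        have : 0 ≤ C₀' * r * A := by positivity
        exact mul_le_mul_of_nonneg_left hρ this
      have hsum : ∑ j ∈ Finset.Icc 1 q, h' (q - j) q / ∏ i ∈ Finset.Icc 1 j, t' (q - i)
          ≤ C₀' * r * A := by
        calc ∑ j ∈ Finset.Icc 1 q, h' (q - j) q / ∏ i ∈ Finset.Icc 1 j, t' (q - i)
            ≤ ∑ j ∈ Finset.Icc 1 q, C₀' * r * A * (1/2) ^ j :=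
              Finset.sum_le_sum hterm
          _ = C₀' * r * A * ∑ j ∈ Finset.Icc 1 q, (1/2 : ℝ) ^ j := by
              rw [Finset.mul_sum]
          _ ≤ C₀' * r * A * 1 := by
              apply mul_le_mul_of_nonneg_left _ (by positivity)
              have := stmt16_geo q
              have : ∑ j ∈ Finset.Icc 1 q, (1/2 : ℝ) ^ j ≤ 1 := by
                have hp : (0:ℝ) ≤ (1/2)^q := by positivity
                linarith [stmt16_geo q]
              exact this
          _ = C₀' * r * A := mul_one _
      have hsmall : C₀' * r * A ≤ 1 / (32 * C ^ 2) * A := by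
        nlinarith [h2.le, hA]
      have hdiag := h'_diag q
      have hmain : ((6 * C) ^ 2)⁻¹ * A ≤ t' q := by
        rw [ht' q hq1]
        have hgap : 1 / (32 * C ^ 2) * A + ((6 * C) ^ 2)⁻¹ * A ≤ ((4 * C) ^ 2)⁻¹ * A := by
          have h16 : ((4 * C) ^ 2)⁻¹ = 1 / (16 * C ^ 2) := by
            rw [mul_pow]; field_simp; ring
          have h36 : ((6 * C) ^ 2)⁻¹ = 1 / (36 * C ^ 2) := by
            rw [mul_pow]; field_simp; ring
          rw [h16, h36]
          rw [div_mul_eq_mul_div, div_mul_eq_mul_div, div_mul_eq_mul_div,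
            div_add_div _ _ (by positivity) (by positivity), div_le_div_iff₀ (by positivity) (by positivity)]
          have h4 : (0:ℝ) ≤ A * (C^2 * C^2) := by positivity
          nlinarith [h4]
        linarith
      exact ⟨hmain, lt_of_lt_of_le hT hmain⟩
end

section
/- With the notation of the context (a generalized Cantor construction on I₀ with removed collections Ĵ_q = ⋃_{p=0}^q Ĵ_{p,q}), suppose t₀ := R − h_{0,0} > 0 and, for every q ≥ 1, t_q := R − h_{q,q} − Σ_{j=1}^q h_{q−j,q}/(Π_{i=1}^j t_{q−i}) > 0, where h_{p,q} := max_{J ∈ 𝒥_p} #{I ∈ Ĵ_{p,q} : I ⊆ J}. Then the generalized Cantor set K_∞ := ⋂_{q ≥ 0} ⋃_{I ∈ 𝒥_q} I is nonempty. -/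
/- STATEMENT 17: [BV11multi, Theorem 3]: positivity of the quantities `t_q`
implies the generalized Cantor set `K_∞` is nonempty. -/

open Set

/-- the `R`-partition of a closed interval into `R` closed subintervals of
equal length. -/
def parR (R : ℕ) (A : Set ℝ) : Set (Set ℝ) :=
  {J | ∃ x y : ℝ, A = Icc x y ∧
    ∃ k : ℕ, k < R ∧
      J = Icc (x + (k : ℝ) * ((y - x) / R)) (x + ((k : ℝ) + 1) * ((y - x) / R))}

/-- the `R`-partition of a collection of closed intervals. -/
def parRs (R : ℕ) (𝒞 : Set (Set ℝ)) : Set (Set ℝ) := ⋃ A ∈ 𝒞, parR R A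

/-- `h_{p,q} = max_{J ∈ 𝒥_p} #{I ∈ Ĵ_{p,q} : I ⊆ J}` (as a real number; the
maximum over an empty collection is `0`). -/
noncomputable def hCount (J : ℕ → Set (Set ℝ)) (Jhatpq : ℕ → ℕ → Set (Set ℝ))
    (p q : ℕ) : ℝ :=
  sSup {x : ℝ | ∃ K ∈ J p, x = (Set.ncard {I | I ∈ Jhatpq p q ∧ I ⊆ K} : ℝ)}

private lemma icc_inj {x y u v : ℝ} (h : x ≤ y) (he : Icc x y = Icc u v) :
    x = u ∧ y = v := by
  have h2 : u ≤ v := nonempty_Icc.1 (he ▸ nonempty_Icc.2 h)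
  have i1 := csInf_Icc h
  have s1 := csSup_Icc h
  rw [he, csInf_Icc h2] at i1
  rw [he, csSup_Icc h2] at s1
  exact ⟨i1.symm, s1.symm⟩

private lemma mem_parR_iff {R : ℕ} (hR : 0 < R) {x ℓ : ℝ} (hℓ : 0 < ℓ) {I : Set ℝ} :
    I ∈ parR R (Icc x (x + ℓ)) ↔
      ∃ k : ℕ, k < R ∧ I = Icc (x + (k : ℝ) * (ℓ / R)) (x + ((k : ℝ) + 1) * (ℓ / R)) := by
  constructor
  · rintro ⟨x', y', hA, k, hk, hI⟩
    obtain ⟨hx, hy⟩ := icc_inj (by linarith) hA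
    refine ⟨k, hk, ?_⟩
    rw [hI, ← hx, ← hy]
    have hxx : x + ℓ - x = ℓ := by ring
    rw [hxx]
  · rintro ⟨k, hk, hI⟩
    refine ⟨x, x + ℓ, rfl, k, hk, ?_⟩
    rw [hI]
    have hxx : x + ℓ - x = ℓ := by ring
    rw [hxx]

private lemma parR_subset {R : ℕ} (hR : 0 < R) {A I : Set ℝ} (h : I ∈ parR R A) : I ⊆ A := by
  obtain ⟨x, y, rfl, k, hk, rfl⟩ := h
  have hRr : (0 : ℝ) < R := by exact_mod_cast hR
  have hk1 : ((k : ℝ) + 1) ≤ R := by exact_mod_cast hk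
  have hk0 : (0 : ℝ) ≤ (k : ℝ) := Nat.cast_nonneg k
  intro z hz
  obtain ⟨hz1, hz2⟩ := hz
  rcases le_or_gt x y with hxy | hxy
  · have hd : 0 ≤ (y - x) / R := div_nonneg (by linarith) hRr.le
    have hRd : (R : ℝ) * ((y - x) / R) = y - x := by field_simp
    constructor
    · nlinarith
    · nlinarith
  · exfalso
    have hd : (y - x) / R < 0 := div_neg_of_neg_of_pos (by linarith) hRr
    nlinarith

private lemma parRs_good {R : ℕ} (hR : 0 < R) {ℓ : ℝ} (hℓ : 0 < ℓ) {C : Set (Set ℝ)}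
    (hfin : C.Finite)
    (hform : ∀ A ∈ C, ∃ x, A = Icc x (x + ℓ))
    (hdisj : ∀ A ∈ C, ∀ B ∈ C, A ≠ B → Disjoint (interior A) (interior B)) :
    (parRs R C).Finite ∧
      (∀ I ∈ parRs R C, ∃ x, I = Icc x (x + ℓ / R)) ∧
      (∀ I ∈ parRs R C, ∀ I' ∈ parRs R C, I ≠ I' → Disjoint (interior I) (interior I')) ∧
      (parRs R C).ncard = R * C.ncard := by
  classical
  have hRr : (0 : ℝ) < R := by exact_mod_cast hR
  have he0 : 0 < ℓ / R := div_pos hℓ hRr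
  have hRd : (R : ℝ) * (ℓ / R) = ℓ := by field_simp
  have child_sub_int : ∀ (x : ℝ) (k : ℕ), k < R →
      Ioo (x + (k : ℝ) * (ℓ / R)) (x + ((k : ℝ) + 1) * (ℓ / R)) ⊆ interior (Icc x (x + ℓ)) := by
    intro x k hk
    rw [interior_Icc]
    apply Ioo_subset_Ioo
    · nlinarith [Nat.cast_nonneg (α := ℝ) k]
    · have hk1 : ((k : ℝ) + 1) ≤ R := by exact_mod_cast hk
      nlinarith
  have child_ne : ∀ (x : ℝ) (k : ℕ),
      (Ioo (x + (k : ℝ) * (ℓ / R)) (x + ((k : ℝ) + 1) * (ℓ / R))).Nonempty := by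
    intro x k
    apply nonempty_Ioo.2
    nlinarith
  have mem_parRs : ∀ I, I ∈ parRs R C ↔ ∃ A ∈ C, I ∈ parR R A := by
    intro I; simp [parRs]
  have int_sub : ∀ A ∈ C, ∀ I ∈ parR R A, (interior I).Nonempty ∧ interior I ⊆ interior A := by
    intro A hA I hI
    obtain ⟨x, rfl⟩ := hform A hA
    rw [mem_parR_iff hR hℓ] at hI
    obtain ⟨k, hk, rfl⟩ := hI
    rw [interior_Icc]
    exact ⟨child_ne x k, child_sub_int x k hk⟩
  have hpform : ∀ I ∈ parRs R C, ∃ x, I = Icc x (x + ℓ / R) := by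
    intro I hI
    obtain ⟨A, hA, hIA⟩ := (mem_parRs I).1 hI
    obtain ⟨x, rfl⟩ := hform A hA
    rw [mem_parR_iff hR hℓ] at hIA
    obtain ⟨k, hk, rfl⟩ := hIA
    refine ⟨x + (k : ℝ) * (ℓ / R), ?_⟩
    rw [show x + ((k : ℝ) + 1) * (ℓ / R) = x + (k : ℝ) * (ℓ / R) + ℓ / R from by ring]
  have hpdisj : ∀ I ∈ parRs R C, ∀ I' ∈ parRs R C, I ≠ I' →
      Disjoint (interior I) (interior I') := by
    intro I hI I' hI' hne
    obtain ⟨A, hA, hIA⟩ := (mem_parRs I).1 hI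
    obtain ⟨A', hA', hIA'⟩ := (mem_parRs I').1 hI'
    by_cases hAA : A = A'
    · subst hAA
      obtain ⟨x, rfl⟩ := hform A hA
      rw [mem_parR_iff hR hℓ] at hIA hIA'
      obtain ⟨k, hk, rfl⟩ := hIA
      obtain ⟨k', hk', rfl⟩ := hIA'
      rw [interior_Icc, interior_Icc]
      have hkk : k ≠ k' := by rintro rfl; exact hne rfl
      rcases lt_or_gt_of_ne hkk with h | h
      · have hcast : ((k : ℝ) + 1) ≤ (k' : ℝ) := by exact_mod_cast h
        rw [Set.disjoint_left]
        rintro z ⟨z1, z2⟩ ⟨z3, z4⟩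
        nlinarith
      · have hcast : ((k' : ℝ) + 1) ≤ (k : ℝ) := by exact_mod_cast h
        rw [Set.disjoint_left]
        rintro z ⟨z1, z2⟩ ⟨z3, z4⟩
        nlinarith
    · obtain ⟨n1, s1⟩ := int_sub A hA I hIA
      obtain ⟨n2, s2⟩ := int_sub A' hA' I' hIA'
      exact Disjoint.mono s1 s2 (hdisj A hA A' hA' hAA)
  -- counting
  have hparR_eq : ∀ A ∈ C, parR R A = ↑((Finset.range R).image
      (fun k : ℕ => Icc (sInf A + (k : ℝ) * (ℓ / R)) (sInf A + ((k : ℝ) + 1) * (ℓ / R)))) := by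
    intro A hA
    obtain ⟨x, rfl⟩ := hform A hA
    have hsInf : sInf (Icc x (x + ℓ)) = x := csInf_Icc (by linarith)
    ext I
    rw [mem_parR_iff hR hℓ]
    simp only [Finset.coe_image, Finset.coe_range, Set.mem_image, Set.mem_Iio, hsInf]
    constructor
    · rintro ⟨k, hk, rfl⟩; exact ⟨k, hk, rfl⟩
    · rintro ⟨k, hk, rfl⟩; exact ⟨k, hk, rfl⟩
  have hUnion : parRs R C = ↑(hfin.toFinset.biUnion (fun A => (Finset.range R).image
      (fun k : ℕ => Icc (sInf A + (k : ℝ) * (ℓ / R)) (sInf A + ((k : ℝ) + 1) * (ℓ / R))))) := by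
    rw [Finset.coe_biUnion]
    ext I
    simp only [parRs, mem_iUnion, Finset.mem_coe, Set.Finite.mem_toFinset, exists_prop]
    constructor
    · rintro ⟨A, hA, hI⟩
      refine ⟨A, hA, ?_⟩
      rw [← Finset.mem_coe, ← hparR_eq A hA]
      exact hI
    · rintro ⟨A, hA, hI⟩
      refine ⟨A, hA, ?_⟩
      rw [hparR_eq A hA]
      exact_mod_cast hI
  have hdisjF : ∀ A ∈ hfin.toFinset, ∀ B ∈ hfin.toFinset, A ≠ B →
      Disjoint ((Finset.range R).image
        (fun k : ℕ => Icc (sInf A + (k : ℝ) * (ℓ / R)) (sInf A + ((k : ℝ) + 1) * (ℓ / R))))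
        ((Finset.range R).image
        (fun k : ℕ => Icc (sInf B + (k : ℝ) * (ℓ / R)) (sInf B + ((k : ℝ) + 1) * (ℓ / R)))) := by
    intro A hA B hB hAB
    rw [Set.Finite.mem_toFinset] at hA hB
    rw [Finset.disjoint_left]
    intro I hIA hIB
    have h1 : I ∈ parR R A := by
      rw [hparR_eq A hA]; exact_mod_cast hIA
    have h2 : I ∈ parR R B := by
      rw [hparR_eq B hB]; exact_mod_cast hIB
    obtain ⟨n1, s1⟩ := int_sub A hA I h1
    obtain ⟨n2, s2⟩ := int_sub B hB I h2
    have hd : Disjoint (interior I) (interior I) :=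
      Disjoint.mono s1 s2 (hdisj A hA B hB hAB)
    rw [disjoint_self] at hd
    exact n1.ne_empty hd
  have hcardimg : ∀ A ∈ C, ((Finset.range R).image
      (fun k : ℕ => Icc (sInf A + (k : ℝ) * (ℓ / R)) (sInf A + ((k : ℝ) + 1) * (ℓ / R)))).card = R := by
    intro A hA
    rw [Finset.card_image_of_injOn, Finset.card_range]
    intro k _ k' _ hkk
    have h1 : sInf A + (k : ℝ) * (ℓ / R) ≤ sInf A + ((k : ℝ) + 1) * (ℓ / R) := by nlinarith
    obtain ⟨h2, -⟩ := icc_inj h1 hkk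
    have : (k : ℝ) = (k' : ℝ) := by
      have := mul_right_cancel₀ (ne_of_gt he0) (by linarith : (k : ℝ) * (ℓ / R) = (k' : ℝ) * (ℓ / R))
      exact this
    exact_mod_cast this
  have hcount : (parRs R C).ncard = R * C.ncard := by
    rw [hUnion, ncard_coe_finset, Finset.card_biUnion hdisjF]
    rw [Finset.sum_congr rfl (fun A hA => hcardimg A ((Set.Finite.mem_toFinset hfin).1 hA))]
    rw [Finset.sum_const, smul_eq_mul]
    rw [Set.ncard_eq_toFinset_card C hfin]
    ring
  refine ⟨?_, hpform, hpdisj, hcount⟩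
  rw [hUnion]
  exact (hfin.toFinset.biUnion _).finite_toSet

private lemma ncard_biUnion_le {ι α : Type*} (F : Finset ι) (f : ι → Set α)
    (hf : ∀ i ∈ F, (f i).Finite) :
    (⋃ i ∈ F, f i).ncard ≤ ∑ i ∈ F, (f i).ncard := by
  classical
  induction F using Finset.induction_on with
  | empty => simp
  | insert _ _ hnotmem ih =>
    rename_i j s
    rw [Finset.sum_insert hnotmem, Finset.set_biUnion_insert]
    calc (f j ∪ ⋃ i ∈ s, f i).ncard ≤ (f j).ncard + (⋃ i ∈ s, f i).ncard :=
          Set.ncard_union_le _ _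
      _ ≤ (f j).ncard + ∑ i ∈ s, (f i).ncard := by
          have := ih (fun i hi => hf i (Finset.mem_insert_of_mem hi))
          omega

theorem stmt17 (R : ℕ) (hR : 2 ≤ R) (a b : ℝ) (hab : a < b)
    (J : ℕ → Set (Set ℝ)) (Jhatpq : ℕ → ℕ → Set (Set ℝ))
    (hJ0 : J 0 = {Icc a b})
    (hJhat_sub : ∀ p q, p ≤ q → Jhatpq p q ⊆ parRs R (J q))
    (hJsucc : ∀ q, J (q + 1) = parRs R (J q) \ ⋃ p ∈ Finset.Iic q, Jhatpq p q)
    (t : ℕ → ℝ)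
    (ht0 : t 0 = R - hCount J Jhatpq 0 0)
    (ht : ∀ q : ℕ, 1 ≤ q →
      t q = R - hCount J Jhatpq q q
        - ∑ j ∈ Finset.Icc 1 q, hCount J Jhatpq (q - j) q / ∏ i ∈ Finset.Icc 1 j, t (q - i))
    (ht_pos : ∀ q : ℕ, 0 < t q) :
    (⋂ q : ℕ, ⋃₀ J q).Nonempty := by
  classical
  have hR0 : 0 < R := by omega
  have hRr : (0 : ℝ) < R := by exact_mod_cast hR0
  set ℓ : ℕ → ℝ := fun q => (b - a) / R ^ q with hℓdef
  have hℓpos : ∀ q, 0 < ℓ q := fun q => div_pos (by linarith) (by positivity)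
  have hℓsucc : ∀ q, ℓ q / R = ℓ (q + 1) := by
    intro q
    rw [hℓdef]
    simp only
    rw [pow_succ, div_div]
  -- structural invariant
  have good : ∀ q, (J q).Finite ∧ (∀ A ∈ J q, ∃ x, A = Icc x (x + ℓ q)) ∧
      (∀ A ∈ J q, ∀ B ∈ J q, A ≠ B → Disjoint (interior A) (interior B)) := by
    intro q
    induction q with
    | zero =>
      rw [hJ0]
      refine ⟨finite_singleton _, ?_, ?_⟩
      · intro A hA
        rw [mem_singleton_iff] at hA
        refine ⟨a, ?_⟩
        rw [hA]
        congr 1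
        rw [hℓdef]
        simp
      · intro A hA B hB hne
        rw [mem_singleton_iff] at hA hB
        exact absurd (hA.trans hB.symm) hne
    | succ q ih =>
      obtain ⟨hf, hform, hdisj⟩ := ih
      obtain ⟨pf, pform, pdisj, -⟩ := parRs_good hR0 (hℓpos q) hf hform hdisj
      have hsub : J (q + 1) ⊆ parRs R (J q) := by
        rw [hJsucc]; exact diff_subset
      refine ⟨pf.subset hsub, ?_, fun A hA B hB hne => pdisj A (hsub hA) B (hsub hB) hne⟩
      intro A hA
      obtain ⟨x, hx⟩ := pform A (hsub hA)
      exact ⟨x, by rw [hx, hℓsucc q]⟩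
  -- nesting
  have down : ∀ q, ∀ A ∈ J (q + 1), ∃ B ∈ J q, A ⊆ B := by
    intro q A hA
    have hA' : A ∈ parRs R (J q) := by
      rw [hJsucc] at hA; exact hA.1
    rw [parRs, mem_iUnion] at hA'
    obtain ⟨B, hB⟩ := hA'
    rw [mem_iUnion] at hB
    obtain ⟨hBm, hAB⟩ := hB
    exact ⟨B, hBm, parR_subset hR0 hAB⟩
  have nest : ∀ p r, p ≤ r → ∀ A ∈ J r, ∃ K ∈ J p, A ⊆ K := by
    intro p r hpr
    induction r, hpr using Nat.le_induction with
    | base => exact fun A hA => ⟨A, hA, subset_rfl⟩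
    | succ r hpr ih =>
      intro A hA
      obtain ⟨B, hB, hAB⟩ := down r A hA
      obtain ⟨K, hK, hBK⟩ := ih B hB
      exact ⟨K, hK, hAB.trans hBK⟩
  set N : ℕ → ℝ := fun q => ((J q).ncard : ℝ) with hNdef
  have hN0 : N 0 = 1 := by
    rw [hNdef]; simp [hJ0]
  have hNnonneg : ∀ q, 0 ≤ N q := fun q => Nat.cast_nonneg _
  -- the key counting inequality
  have key : ∀ q, t q * N q ≤ N (q + 1) := by
    intro q
    induction q using Nat.strong_induction_on with
    | _ q ih =>
    have grow : ∀ p r, p ≤ r → r ≤ q → N p * ∏ i ∈ Finset.Ico p r, t i ≤ N r := by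
      intro p r hpr hrq
      induction r, hpr using Nat.le_induction with
      | base => simp
      | succ r hpr ih2 =>
        have h1 := ih r (by omega)
        have h2 := ih2 (by omega)
        rw [Finset.prod_Ico_succ_top hpr, ← mul_assoc]
        calc N p * (∏ i ∈ Finset.Ico p r, t i) * t r ≤ N r * t r :=
              mul_le_mul_of_nonneg_right h2 (ht_pos r).le
          _ = t r * N r := mul_comm _ _
          _ ≤ N (r + 1) := h1
    have hNpos : ∀ p, p ≤ q → 0 < N p := by
      intro p hp
      have hg := grow 0 p (Nat.zero_le p) hp
      rw [hN0, one_mul] at hg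
      exact lt_of_lt_of_le (Finset.prod_pos fun i _ => ht_pos i) hg
    obtain ⟨hfq, hformq, hdisjq⟩ := good q
    obtain ⟨pf, -, -, pcount⟩ := parRs_good hR0 (hℓpos q) hfq hformq hdisjq
    -- each Jhatpq p q is finite
    have hhatfin : ∀ p, p ≤ q → (Jhatpq p q).Finite :=
      fun p hp => pf.subset (hJhat_sub p q hp)
    -- N (q+1) ≥ R * N q - ∑ removed
    have hstep1 : (R : ℝ) * N q - ∑ p ∈ Finset.Iic q, ((Jhatpq p q).ncard : ℝ) ≤ N (q + 1) := by
      have hsub : parRs R (J q) ⊆ (J (q + 1)) ∪ ⋃ p ∈ Finset.Iic q, Jhatpq p q := by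
        intro I hI
        by_cases hIU : I ∈ ⋃ p ∈ Finset.Iic q, Jhatpq p q
        · exact Or.inr hIU
        · left; rw [hJsucc]; exact ⟨hI, hIU⟩
      have hUfin : (⋃ p ∈ Finset.Iic q, Jhatpq p q).Finite := by
        apply Set.Finite.biUnion (Finset.finite_toSet _)
        intro p hp
        exact hhatfin p (by simpa using hp)
      have hJq1fin : (J (q + 1)).Finite := (good (q + 1)).1
      have h1 : (parRs R (J q)).ncard ≤ (J (q + 1)).ncard + (⋃ p ∈ Finset.Iic q, Jhatpq p q).ncard := by
        calc (parRs R (J q)).ncard ≤ ((J (q + 1)) ∪ ⋃ p ∈ Finset.Iic q, Jhatpq p q).ncard :=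
              Set.ncard_le_ncard hsub (hJq1fin.union hUfin)
          _ ≤ _ := Set.ncard_union_le _ _
      have h2 : (⋃ p ∈ Finset.Iic q, Jhatpq p q).ncard ≤ ∑ p ∈ Finset.Iic q, (Jhatpq p q).ncard :=
        ncard_biUnion_le _ _ (fun p hp => hhatfin p (by simpa using hp))
      have h3 : (parRs R (J q)).ncard = R * (J q).ncard := pcount
      have := h1.trans (by omega : (J (q + 1)).ncard + (⋃ p ∈ Finset.Iic q, Jhatpq p q).ncard ≤ (J (q + 1)).ncard + ∑ p ∈ Finset.Iic q, (Jhatpq p q).ncard)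
      rw [h3] at this
      have hcast : (R : ℝ) * N q ≤ N (q + 1) + ∑ p ∈ Finset.Iic q, ((Jhatpq p q).ncard : ℝ) := by
        rw [hNdef]
        push_cast
        exact_mod_cast this
      linarith
    -- hCount is an upper bound for each local count, and is nonneg
    have hcount_ub : ∀ p, p ≤ q → ∀ K ∈ J p,
        ((Set.ncard {I | I ∈ Jhatpq p q ∧ I ⊆ K} : ℝ)) ≤ hCount J Jhatpq p q := by
      intro p hp K hK
      apply le_csSup
      · have : {x : ℝ | ∃ K ∈ J p, x = (Set.ncard {I | I ∈ Jhatpq p q ∧ I ⊆ K} : ℝ)} =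
            (fun K => (Set.ncard {I | I ∈ Jhatpq p q ∧ I ⊆ K} : ℝ)) '' (J p) := by
          ext y; simp [eq_comm]
        rw [this]
        exact (((good p).1).image _).bddAbove
      · exact ⟨K, hK, rfl⟩
    have hJpne : ∀ p, p ≤ q → (J p).Nonempty := by
      intro p hp
      apply Set.nonempty_of_ncard_ne_zero
      have := hNpos p hp
      rw [hNdef] at this
      simp only at this
      exact_mod_cast this.ne'
    have hcount_nonneg : ∀ p, p ≤ q → 0 ≤ hCount J Jhatpq p q := by
      intro p hp
      obtain ⟨K, hK⟩ := hJpne p hp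
      exact le_trans (Nat.cast_nonneg _) (hcount_ub p hp K hK)
    -- per-p bound: ncard (Jhatpq p q) ≤ hCount p q * N p
    have hperp : ∀ p, p ≤ q → ((Jhatpq p q).ncard : ℝ) ≤ hCount J Jhatpq p q * N p := by
      intro p hp
      have hcover : Jhatpq p q ⊆ ⋃ K ∈ ((good p).1).toFinset, {I | I ∈ Jhatpq p q ∧ I ⊆ K} := by
        intro I hI
        have hIP : I ∈ parRs R (J q) := hJhat_sub p q hp hI
        rw [parRs, mem_iUnion] at hIP
        obtain ⟨B, hB⟩ := hIP
        rw [mem_iUnion] at hB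
        obtain ⟨hBm, hIB⟩ := hB
        obtain ⟨K, hK, hBK⟩ := nest p q hp B hBm
        rw [mem_iUnion]
        exact ⟨K, by rw [mem_iUnion]; exact ⟨(Set.Finite.mem_toFinset _).2 hK, hI, (parR_subset hR0 hIB).trans hBK⟩⟩
      have hsfin : ∀ K, ({I | I ∈ Jhatpq p q ∧ I ⊆ K}).Finite :=
        fun K => (hhatfin p hp).subset (fun I hI => hI.1)
      have h1 : ((Jhatpq p q).ncard : ℕ) ≤ ∑ K ∈ ((good p).1).toFinset, ({I | I ∈ Jhatpq p q ∧ I ⊆ K}).ncard := by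
        have hbigfin : (⋃ K ∈ ((good p).1).toFinset, {I | I ∈ Jhatpq p q ∧ I ⊆ K}).Finite :=
          Set.Finite.biUnion (Finset.finite_toSet _) (fun K _ => hsfin K)
        calc (Jhatpq p q).ncard ≤ (⋃ K ∈ ((good p).1).toFinset, {I | I ∈ Jhatpq p q ∧ I ⊆ K}).ncard :=
              Set.ncard_le_ncard hcover hbigfin
          _ ≤ _ := ncard_biUnion_le _ _ (fun K _ => hsfin K)
      have h2 : ((Jhatpq p q).ncard : ℝ) ≤ ∑ K ∈ ((good p).1).toFinset, (({I | I ∈ Jhatpq p q ∧ I ⊆ K}).ncard : ℝ) := by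
        exact_mod_cast h1
      calc ((Jhatpq p q).ncard : ℝ) ≤ ∑ K ∈ ((good p).1).toFinset, (({I | I ∈ Jhatpq p q ∧ I ⊆ K}).ncard : ℝ) := h2
        _ ≤ ∑ K ∈ ((good p).1).toFinset, hCount J Jhatpq p q := by
            apply Finset.sum_le_sum
            intro K hK
            exact hcount_ub p hp K ((Set.Finite.mem_toFinset _).1 hK)
        _ = (((good p).1).toFinset.card : ℝ) * hCount J Jhatpq p q := by
            rw [Finset.sum_const, nsmul_eq_mul]
        _ = hCount J Jhatpq p q * N p := by
            rw [hNdef]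
            simp only
            rw [Set.ncard_eq_toFinset_card (J p) (good p).1]
            ring
    -- total removed bound: ∑_{p ≤ q} hCount p q * N p ≤ (R - t q) * N q
    have htotal : ∑ p ∈ Finset.Iic q, hCount J Jhatpq p q * N p ≤ ((R : ℝ) - t q) * N q := by
      rcases Nat.eq_zero_or_pos q with rfl | hq
      · rw [show Finset.Iic 0 = {0} from rfl, Finset.sum_singleton, hN0, ht0]
        ring_nf
        linarith [hN0]
      · have hq1 : 1 ≤ q := hq
        rw [← Finset.Iio_insert, Finset.sum_insert (by simp)]
        have hreidx : ∑ p ∈ Finset.Iio q, hCount J Jhatpq p q * N p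
            = ∑ j ∈ Finset.Icc 1 q, hCount J Jhatpq (q - j) q * N (q - j) := by
          apply Finset.sum_nbij' (fun p => q - p) (fun j => q - j)
          · intro p hp; rw [Finset.mem_Iio] at hp; rw [Finset.mem_Icc]; omega
          · intro j hj; rw [Finset.mem_Icc] at hj; rw [Finset.mem_Iio]; omega
          · intro p hp; rw [Finset.mem_Iio] at hp; omega
          · intro j hj; rw [Finset.mem_Icc] at hj; omega
          · intro p hp; rw [Finset.mem_Iio] at hp
            rw [show q - (q - p) = p from by omega]
        have hterm : ∀ j ∈ Finset.Icc 1 q, hCount J Jhatpq (q - j) q * N (q - j)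
            ≤ hCount J Jhatpq (q - j) q / (∏ i ∈ Finset.Icc 1 j, t (q - i)) * N q := by
          intro j hj
          rw [Finset.mem_Icc] at hj
          have hprod_eq : ∏ i ∈ Finset.Ico (q - j) q, t i = ∏ i ∈ Finset.Icc 1 j, t (q - i) := by
            apply Finset.prod_nbij' (fun i => q - i) (fun i => q - i)
            · intro i hi; rw [Finset.mem_Ico] at hi; rw [Finset.mem_Icc]; omega
            · intro i hi; rw [Finset.mem_Icc] at hi; rw [Finset.mem_Ico]; omega
            · intro i hi; rw [Finset.mem_Ico] at hi; omega
            · intro i hi; rw [Finset.mem_Icc] at hi; omega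
            · intro i hi; rw [Finset.mem_Ico] at hi
              rw [show q - (q - i) = i from by omega]
          have hprodpos : 0 < ∏ i ∈ Finset.Icc 1 j, t (q - i) :=
            Finset.prod_pos (fun i _ => ht_pos _)
          have hgrow := grow (q - j) q (by omega) le_rfl
          rw [hprod_eq] at hgrow
          have hh := hcount_nonneg (q - j) (by omega)
          rw [div_mul_eq_mul_div, le_div_iff₀ hprodpos]
          calc hCount J Jhatpq (q - j) q * N (q - j) * ∏ i ∈ Finset.Icc 1 j, t (q - i)
              = hCount J Jhatpq (q - j) q * (N (q - j) * ∏ i ∈ Finset.Icc 1 j, t (q - i)) := by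
                ring
            _ ≤ hCount J Jhatpq (q - j) q * N q := mul_le_mul_of_nonneg_left hgrow hh
        calc hCount J Jhatpq q q * N q + ∑ p ∈ Finset.Iio q, hCount J Jhatpq p q * N p
            = hCount J Jhatpq q q * N q
              + ∑ j ∈ Finset.Icc 1 q, hCount J Jhatpq (q - j) q * N (q - j) := by rw [hreidx]
          _ ≤ hCount J Jhatpq q q * N q
              + ∑ j ∈ Finset.Icc 1 q, hCount J Jhatpq (q - j) q
                  / (∏ i ∈ Finset.Icc 1 j, t (q - i)) * N q := by
                exact add_le_add_right (Finset.sum_le_sum hterm) _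
          _ = (hCount J Jhatpq q q
              + ∑ j ∈ Finset.Icc 1 q, hCount J Jhatpq (q - j) q
                  / ∏ i ∈ Finset.Icc 1 j, t (q - i)) * N q := by
                rw [add_mul, Finset.sum_mul]
          _ = ((R : ℝ) - t q) * N q := by
                rw [ht q hq1]; ring
    have hfinal : ∑ p ∈ Finset.Iic q, ((Jhatpq p q).ncard : ℝ) ≤ ((R : ℝ) - t q) * N q := by
      refine le_trans (Finset.sum_le_sum ?_) htotal
      intro p hp
      exact hperp p (by simpa using hp)
    calc t q * N q = (R : ℝ) * N q - ((R : ℝ) - t q) * N q := by ring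
      _ ≤ (R : ℝ) * N q - ∑ p ∈ Finset.Iic q, ((Jhatpq p q).ncard : ℝ) := by linarith
      _ ≤ N (q + 1) := hstep1
  -- positivity of N
  have hNpos : ∀ q, 0 < N q := by
    intro q
    induction q with
    | zero => rw [hN0]; norm_num
    | succ q ihq => exact lt_of_lt_of_le (mul_pos (ht_pos q) ihq) (key q)
  -- topology
  have hne : ∀ q, (⋃₀ J q).Nonempty := by
    intro q
    have hJne : (J q).Nonempty := by
      apply Set.nonempty_of_ncard_ne_zero
      have := hNpos q
      rw [hNdef] at this
      simp only at this
      exact_mod_cast this.ne'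
    obtain ⟨A, hA⟩ := hJne
    obtain ⟨x, rfl⟩ := (good q).2.1 A hA
    exact ⟨x, Icc x (x + ℓ q), hA, left_mem_Icc.2 (by linarith [hℓpos q])⟩
  have hmono : ∀ q, ⋃₀ J (q + 1) ⊆ ⋃₀ J q := by
    intro q z hz
    obtain ⟨A, hA, hzA⟩ := hz
    obtain ⟨B, hB, hAB⟩ := down q A hA
    exact ⟨B, hB, hAB hzA⟩
  have hcpt : IsCompact (⋃₀ J 0) := by
    apply Set.Finite.isCompact_sUnion (good 0).1
    intro s hs
    obtain ⟨x, rfl⟩ := (good 0).2.1 s hs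
    exact isCompact_Icc
  have hcl : ∀ q, IsClosed (⋃₀ J q) := by
    intro q
    rw [sUnion_eq_biUnion]
    apply Set.Finite.isClosed_biUnion (good q).1
    intro s hs
    obtain ⟨x, rfl⟩ := (good q).2.1 s hs
    exact isClosed_Icc
  exact IsCompact.nonempty_iInter_of_sequence_nonempty_isCompact_isClosed _ hmono hne hcpt hcl
end
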